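/- arXiv:math/0611091 — 4 statements merged into one kernel-verified Lean document; each statement's English description precedes it below -/
import Mathlib

section
/- On the classical 37-hole French solitaire board, the problem 'vacate the central hole and play to leave a single peg in the central hole' is unsolvable: no sequence of jumps starting from all holes occupied except the centre ends with a single peg at the centre. -/
/-- The four orthogonal unit directions. -/
def dirs : Finset (ℤ × ℤ) := {(1,0), (-1,0), (0,1), (0,-1)}

/-- `(A, B, C)` is a jump triple on board `T`: three collinear adjacent holes,
with `B = A + d` and `C = A + 2d` for a unit direction `d`. -/
def IsJumpTriple (T : Finset (ℤ × ℤ)) (A B C : ℤ × ℤ) : Prop :=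
  A ∈ T ∧ B ∈ T ∧ C ∈ T ∧ ∃ d ∈ dirs, B = A + d ∧ C = A + d + d

/-- A single peg-solitaire jump: the peg at `A` jumps over the peg at `B`
into the empty hole `C`, removing the peg at `B`. -/
def Jump (T : Finset (ℤ × ℤ)) (P Q : Finset (ℤ × ℤ)) : Prop :=
  ∃ A B C, IsJumpTriple T A B C ∧ A ∈ P ∧ B ∈ P ∧ C ∉ P ∧
    Q = (P \ {A, B}) ∪ {C}

/-- The classical 37-hole French solitaire board. -/
noncomputable def frenchBoard : Finset (ℤ × ℤ) :=
  (Finset.Icc (0:ℤ) 6 ×ˢ Finset.Icc (0:ℤ) 6).filter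
    (fun p => (2 ≤ p.1 ∧ p.1 ≤ 4) ∨ (2 ≤ p.2 ∧ p.2 ≤ 4) ∨
      p ∈ ({(1,1), (1,5), (5,1), (5,5)} : Finset (ℤ × ℤ)))

def wgt (p : ℤ × ℤ) : ZMod 2 := if (p.1 + p.2) % 3 = 2 then 0 else 1

def msum (P : Finset (ℤ × ℤ)) : ZMod 2 := ∑ p ∈ P, wgt p

lemma wgt_triple (A d : ℤ × ℤ) (hd : d ∈ dirs) :
    wgt A + wgt (A + d) + wgt (A + d + d) = 0 := by
  fin_cases hd <;>
  · simp only [wgt, Prod.fst_add, Prod.snd_add]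
    split_ifs <;> first | decide | (exfalso; omega)

lemma msum_jump {T P Q : Finset (ℤ × ℤ)} (h : Jump T P Q) : msum Q = msum P := by
  obtain ⟨A, B, C, ⟨_, _, _, d, hd, hB, hC⟩, hAP, hBP, hCP, hQ⟩ := h
  subst hB hC hQ
  have hAB : A ≠ A + d := by
    fin_cases hd <;> simp [Prod.ext_iff]
  have hsub : ({A, A + d} : Finset (ℤ × ℤ)) ⊆ P := by
    simp [Finset.insert_subset_iff, hAP, hBP]
  have hdisj : Disjoint (P \ {A, A + d}) ({A + d + d} : Finset (ℤ × ℤ)) := by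
    simp only [Finset.disjoint_singleton_right, Finset.mem_sdiff]
    intro ⟨hc, _⟩; exact hCP hc
  have htriple := wgt_triple A d hd
  have h2 : (2 : ZMod 2) = 0 := by decide
  simp only [msum, Finset.sum_union hdisj, Finset.sum_sdiff_eq_sub hsub,
    Finset.sum_pair hAB, Finset.sum_singleton]
  linear_combination htriple - (wgt A + wgt (A + d)) * h2

/-- on the 37-hole French board one cannot vacate the centre and
play to leave a single peg in the centre. -/
theorem stmt_4 :
    ¬ Relation.ReflTransGen (Jump frenchBoard)
        (frenchBoard \ {((3:ℤ), (3:ℤ))}) {((3:ℤ), (3:ℤ))} := by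
  intro h
  have key : ∀ P Q : Finset (ℤ × ℤ),
      Relation.ReflTransGen (Jump frenchBoard) P Q → msum Q = msum P := by
    intro P Q h
    induction h with
    | refl => rfl
    | tail _ hj ih => rw [msum_jump hj, ih]
  have := key _ _ h
  have h1 : msum {((3:ℤ), (3:ℤ))} = 1 := by decide
  have h0 : msum (frenchBoard \ {((3:ℤ), (3:ℤ))}) = 0 := by decide
  rw [h1, h0] at this
  exact one_ne_zero this
end

section
/- On the 33-hole English solitaire board, if the initial position is the full board minus one hole at (x₀,y₀) and the final position is a single peg at (x₁,y₁), then x₀ ≡ x₁ (mod 3) and y₀ ≡ y₁ (mod 3). -/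
/-- The 33-hole English solitaire board. -/
noncomputable def englishBoard : Finset (ℤ × ℤ) :=
  (Finset.Icc (0:ℤ) 6 ×ˢ Finset.Icc (0:ℤ) 6).filter
    (fun p => (2 ≤ p.1 ∧ p.1 ≤ 4) ∨ (2 ≤ p.2 ∧ p.2 ≤ 4))

/-- Weight of a residue class mod 3 in the Klein four-group. -/
def w (s : ℤ) : ZMod 2 × ZMod 2 :=
  if s % 3 = 0 then (1,0) else if s % 3 = 1 then (0,1) else (1,1)

lemma w_triple (s d : ℤ) (hd : d = 1 ∨ d = -1) :
    w s + w (s + d) + w (s + d + d) = 0 := by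
  have h0 : s % 3 = 0 ∨ s % 3 = 1 ∨ s % 3 = 2 := by omega
  simp only [w]
  rcases hd with rfl | rfl <;> rcases h0 with h | h | h <;>
    rw [h] <;>
    first
      | rw [show (s+1)%3 = 1 from by omega, show (s+1+1)%3 = 2 from by omega]
      | rw [show (s+1)%3 = 2 from by omega, show (s+1+1)%3 = 0 from by omega]
      | rw [show (s+1)%3 = 0 from by omega, show (s+1+1)%3 = 1 from by omega]
      | rw [show (s+-1)%3 = 2 from by omega, show (s+-1+-1)%3 = 1 from by omega]
      | rw [show (s+-1)%3 = 0 from by omega, show (s+-1+-1)%3 = 2 from by omega]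
      | rw [show (s+-1)%3 = 1 from by omega, show (s+-1+-1)%3 = 0 from by omega]
  all_goals decide

lemma w_inj (s t : ℤ) (h : w s = w t) : s % 3 = t % 3 := by
  have hs : s % 3 = 0 ∨ s % 3 = 1 ∨ s % 3 = 2 := by omega
  have ht : t % 3 = 0 ∨ t % 3 = 1 ∨ t % 3 = 2 := by omega
  simp only [w] at h
  rcases hs with hs | hs | hs <;> rcases ht with ht | ht | ht <;>
    rw [hs, ht] at h ⊢ <;> revert h <;> decide

lemma sum_jump (c : ℤ × ℤ → ZMod 2 × ZMod 2)
    {P Q : Finset (ℤ × ℤ)} (hj : Jump englishBoard P Q)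
    (hc : ∀ A B C, IsJumpTriple englishBoard A B C → c A + c B + c C = 0) :
    ∑ p ∈ Q, c p = ∑ p ∈ P, c p := by
  obtain ⟨A, B, C, ht, hA, hB, hC, rfl⟩ := hj
  obtain ⟨-, -, -, d, hd, hBA, -⟩ := id ht
  have hd0 : d ≠ 0 := by
    revert hd; simp only [dirs]; intro hd
    fin_cases hd <;> decide
  have hAB : A ≠ B := by
    intro h
    apply hd0
    have : A + 0 = A + d := by rw [add_zero, ← hBA, h]
    exact (add_left_cancel this).symm
  have hCAB : C ∉ P \ {A, B} := fun hmem => hC (Finset.mem_sdiff.1 hmem).1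
  have hsub : ({A, B} : Finset (ℤ × ℤ)) ⊆ P := by
    intro x hx
    rcases Finset.mem_insert.1 hx with rfl | hx
    · exact hA
    · rw [Finset.mem_singleton.1 hx]; exact hB
  have h0 : c A + c B + c C = 0 := hc _ _ _ ht
  have hsd : ∑ p ∈ P \ {A, B}, c p + (c A + c B) = ∑ p ∈ P, c p := by
    rw [← Finset.sum_pair hAB]
    exact Finset.sum_sdiff hsub
  rw [Finset.sum_union (Finset.disjoint_singleton_right.2 hCAB),
    Finset.sum_singleton]
  have hcc : c C = c A + c B := by
    have hneg : ∀ g : ZMod 2 × ZMod 2, -g = g := by decide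
    have h1 : -(c C) = c A + c B := neg_eq_of_add_eq_zero_left h0
    rw [← h1, hneg]
  rw [hcc, ← hsd]

lemma dirs_sum (d : ℤ × ℤ) (hd : d ∈ dirs) :
    (d.1 + d.2 = 1 ∨ d.1 + d.2 = -1) ∧ (d.1 - d.2 = 1 ∨ d.1 - d.2 = -1) := by
  fin_cases hd <;> simp

lemma inv_jump {P Q : Finset (ℤ × ℤ)} (hj : Jump englishBoard P Q) :
    (∑ p ∈ Q, w (p.1 + p.2) = ∑ p ∈ P, w (p.1 + p.2)) ∧
    (∑ p ∈ Q, w (p.1 - p.2) = ∑ p ∈ P, w (p.1 - p.2)) := by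
  constructor
  · refine sum_jump _ hj ?_
    rintro A B C ⟨-, -, -, d, hd, rfl, rfl⟩
    have h := (dirs_sum d hd).1
    have := w_triple (A.1 + A.2) (d.1 + d.2) h
    simp only [Prod.fst_add, Prod.snd_add]
    convert this using 3 <;> ring
  · refine sum_jump _ hj ?_
    rintro A B C ⟨-, -, -, d, hd, rfl, rfl⟩
    have h := (dirs_sum d hd).2
    have := w_triple (A.1 - A.2) (d.1 - d.2) h
    simp only [Prod.fst_add, Prod.snd_add]
    convert this using 3 <;> ring

lemma board_sum_plus : ∑ p ∈ englishBoard, w (p.1 + p.2) = 0 := by decide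
lemma board_sum_minus : ∑ p ∈ englishBoard, w (p.1 - p.2) = 0 := by decide

/-- on the English board, a single-vacancy to single-survivor play
forces the vacancy and the survivor to be congruent coordinatewise mod 3. -/
theorem stmt_8 (x₀ y₀ x₁ y₁ : ℤ)
    (h₀ : (x₀, y₀) ∈ englishBoard) (h₁ : (x₁, y₁) ∈ englishBoard)
    (h : Relation.ReflTransGen (Jump englishBoard)
      (englishBoard \ {(x₀, y₀)}) {(x₁, y₁)}) :
    x₀ % 3 = x₁ % 3 ∧ y₀ % 3 = y₁ % 3 := by
  have hneg : ∀ g : ZMod 2 × ZMod 2, -g = g := by decide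
  have key : ∀ Q, Relation.ReflTransGen (Jump englishBoard)
      (englishBoard \ {(x₀, y₀)}) Q →
      (∑ p ∈ Q, w (p.1 + p.2) = w (x₀ + y₀)) ∧
      (∑ p ∈ Q, w (p.1 - p.2) = w (x₀ - y₀)) := by
    intro Q hQ
    induction hQ with
    | refl =>
      have hsub : ({((x₀ : ℤ), (y₀ : ℤ))} : Finset (ℤ × ℤ)) ⊆ englishBoard := by
        simpa using h₀
      constructor
      · have := Finset.sum_sdiff (f := fun p : ℤ × ℤ => w (p.1 + p.2)) hsub
        rw [board_sum_plus, Finset.sum_singleton] at this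
        have h2 : ∑ p ∈ englishBoard \ {((x₀:ℤ), (y₀:ℤ))}, w (p.1 + p.2)
            = -(w (x₀ + y₀)) := by
          rw [eq_neg_iff_add_eq_zero]; exact this
        rw [h2, hneg]
      · have := Finset.sum_sdiff (f := fun p : ℤ × ℤ => w (p.1 - p.2)) hsub
        rw [board_sum_minus, Finset.sum_singleton] at this
        have h2 : ∑ p ∈ englishBoard \ {((x₀:ℤ), (y₀:ℤ))}, w (p.1 - p.2)
            = -(w (x₀ - y₀)) := by
          rw [eq_neg_iff_add_eq_zero]; exact this
        rw [h2, hneg]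
    | tail _ hjump ih =>
      have h3 := inv_jump hjump
      exact ⟨h3.1.trans ih.1, h3.2.trans ih.2⟩
  have hfin := key _ h
  simp only [Finset.sum_singleton] at hfin
  obtain ⟨hp, hm⟩ := hfin
  have e1 := w_inj _ _ hp
  have e2 := w_inj _ _ hm
  constructor <;> omega
end

section
/- On the 33-hole English board, the maximum length of any geometrically possible sweep is 16: there exists a position and a peg that can make 16 consecutive jumps, and no position admits a sweep of length 17 or more. -/
/-- `SweepFrom T k P a`: the peg currently at `a` can make `k` further
consecutive jumps starting from position `P`. -/
def SweepFrom (T : Finset (ℤ × ℤ)) : ℕ → Finset (ℤ × ℤ) → (ℤ × ℤ) → Prop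
  | 0, _, _ => True
  | k + 1, P, a =>
      ∃ B C, IsJumpTriple T a B C ∧ a ∈ P ∧ B ∈ P ∧ C ∉ P ∧
        SweepFrom T k ((P \ {a, B}) ∪ {C}) C

/-- `CanSweep T P k`: some peg of `P` can make a `k`-sweep (`k` consecutive jumps). -/
def CanSweep (T : Finset (ℤ × ℤ)) (P : Finset (ℤ × ℤ)) (k : ℕ) : Prop :=
  ∃ a ∈ P, SweepFrom T k P a

lemma sweep_step {T : Finset (ℤ × ℤ)} {k : ℕ} {P P' : Finset (ℤ × ℤ)} {a B C : ℤ × ℤ}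
    (h1 : IsJumpTriple T a B C) (h2 : a ∈ P) (h3 : B ∈ P) (h4 : C ∉ P)
    (h5 : (P \ {a, B}) ∪ {C} = P') (h6 : SweepFrom T k P' C) :
    SweepFrom T (k + 1) P a := by
  simp only [SweepFrom]
  exact ⟨B, C, h1, h2, h3, h4, h5 ▸ h6⟩

/-- Holes that can serve as the jumped-over peg, with parity opposite (in
coordinate-sum) to `a`. -/
noncomputable def goodA (a : ℤ × ℤ) : Finset (ℤ × ℤ) :=
  englishBoard.filter
    (fun b => (¬ (2 ∣ (a.1 + a.2 + b.1 + b.2))) ∧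
      ∃ d ∈ dirs, b - d ∈ englishBoard ∧ b + d ∈ englishBoard)

lemma goodA_shift (a d : ℤ × ℤ) : goodA (a + d + d) = goodA a := by
  unfold goodA
  apply Finset.filter_congr
  intro b _
  have h : (2 ∣ ((a + d + d).1 + (a + d + d).2 + b.1 + b.2)) ↔
      (2 ∣ (a.1 + a.2 + b.1 + b.2)) := by
    simp only [Prod.fst_add, Prod.snd_add]
    omega
  rw [h]

lemma dirs_cases {d : ℤ × ℤ} (hd : d ∈ dirs) :
    d = (1,0) ∨ d = (-1,0) ∨ d = (0,1) ∨ d = (0,-1) := by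
  simp only [dirs, Finset.mem_insert, Finset.mem_singleton] at hd
  tauto

lemma key : ∀ (k : ℕ) (P : Finset (ℤ × ℤ)) (a : ℤ × ℤ) (S : Finset (ℤ × ℤ)),
    SweepFrom englishBoard k P a → (∀ b ∈ S, b ∉ P) → S ⊆ goodA a →
    k ≤ (goodA a \ S).card := by
  intro k
  induction k with
  | zero => intro _ _ _ _ _ _; exact Nat.zero_le _
  | succ k ih =>
    intro P a S hs hSP hSg
    obtain ⟨B, C, ⟨hA, hB, hC, d, hd, hBd, hCd⟩, haP, hBP, hCP, hrest⟩ := hs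
    have hdc := dirs_cases hd
    have hB1 : B.1 = a.1 + d.1 := by rw [hBd]; rfl
    have hB2 : B.2 = a.2 + d.2 := by rw [hBd]; rfl
    have hC1 : C.1 = a.1 + d.1 + d.1 := by rw [hCd]; rfl
    have hC2 : C.2 = a.2 + d.2 + d.2 := by rw [hCd]; rfl
    have hdsum : d.1 + d.2 = 1 ∨ d.1 + d.2 = -1 := by
      rcases hdc with h | h | h | h <;> subst h <;> simp
    have hBgood : B ∈ goodA a := by
      refine Finset.mem_filter.2 ⟨hB, ?_, d, hd, ?_, ?_⟩
      · omega
      · have : B - d = a := by rw [hBd]; exact add_sub_cancel_right a d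
        rwa [this]
      · have : B + d = C := by rw [hBd, hCd]
        rwa [this]
    have hBnS : B ∉ S := fun h => hSP B h hBP
    have hBC : B ≠ C := by
      intro h
      rw [h] at hB1 hB2
      rcases hdc with hh | hh | hh | hh <;> subst hh <;> omega
    have hCng : C ∉ goodA a := by
      intro h
      have := (Finset.mem_filter.1 h).2.1
      exact this (by omega)
    have hstep : ∀ b ∈ insert B S, b ∉ (P \ {a, B}) ∪ {C} := by
      intro b hb hbm
      rcases Finset.mem_union.1 hbm with hm | hm
      · have hbP := (Finset.mem_sdiff.1 hm).1
        have hbne := (Finset.mem_sdiff.1 hm).2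
        rcases Finset.mem_insert.1 hb with rfl | hbS
        · exact hbne (Finset.mem_insert.2 (Or.inr (Finset.mem_singleton.2 rfl)))
        · exact hSP b hbS hbP
      · have hbC : b = C := Finset.mem_singleton.1 hm
        rcases Finset.mem_insert.1 hb with rfl | hbS
        · exact hBC hbC
        · exact hCng (hbC ▸ hSg hbS)
    have hgood_eq : goodA C = goodA a := by rw [hCd]; exact goodA_shift a d
    have hsub : insert B S ⊆ goodA a := by
      intro b hb
      rcases Finset.mem_insert.1 hb with rfl | hbS
      · exact hBgood
      · exact hSg hbS
    have hk : k ≤ (goodA C \ insert B S).card := ih _ C (insert B S) hrest hstep (hgood_eq ▸ hsub)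
    rw [hgood_eq] at hk
    have hBin : B ∈ goodA a \ S := Finset.mem_sdiff.2 ⟨hBgood, hBnS⟩
    have heq : goodA a \ insert B S = (goodA a \ S).erase B := by
      ext x
      simp only [Finset.mem_sdiff, Finset.mem_insert, Finset.mem_erase]
      tauto
    rw [heq] at hk
    have := Finset.card_erase_add_one hBin
    omega

lemma goodA_card (a : ℤ × ℤ) : (goodA a).card ≤ 16 := by
  rcases Int.even_or_odd (a.1 + a.2) with he | ho
  · have hsub : goodA a ⊆ englishBoard.filter (fun b => ¬ (2 ∣ (b.1 + b.2))) := by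
      intro b hb
      obtain ⟨hbB, hp, _⟩ := Finset.mem_filter.1 hb
      refine Finset.mem_filter.2 ⟨hbB, ?_⟩
      obtain ⟨m, hm⟩ := he
      omega
    have : (englishBoard.filter (fun b => ¬ (2 ∣ (b.1 + b.2)))).card = 16 := by decide
    exact le_trans (Finset.card_le_card hsub) (le_of_eq this)
  · have hsub : goodA a ⊆ englishBoard.filter
        (fun b => (2 ∣ (b.1 + b.2)) ∧
          ∃ d ∈ dirs, b - d ∈ englishBoard ∧ b + d ∈ englishBoard) := by
      intro b hb
      obtain ⟨hbB, hp, hj⟩ := Finset.mem_filter.1 hb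
      refine Finset.mem_filter.2 ⟨hbB, ?_, hj⟩
      obtain ⟨m, hm⟩ := ho
      omega
    have : (englishBoard.filter
        (fun b => (2 ∣ (b.1 + b.2)) ∧
          ∃ d ∈ dirs, b - d ∈ englishBoard ∧ b + d ∈ englishBoard)).card = 9 := by decide
    exact le_trans (Finset.card_le_card hsub) (by omega)

def P0 : Finset (ℤ × ℤ) := {((0:ℤ),(3:ℤ)), ((1:ℤ),(2:ℤ)), ((1:ℤ),(4:ℤ)), ((2:ℤ),(0:ℤ)), ((2:ℤ),(1:ℤ)), ((2:ℤ),(3:ℤ)), ((2:ℤ),(5:ℤ)), ((3:ℤ),(0:ℤ)), ((3:ℤ),(2:ℤ)), ((3:ℤ),(4:ℤ)), ((3:ℤ),(6:ℤ)), ((4:ℤ),(1:ℤ)), ((4:ℤ),(3:ℤ)), ((4:ℤ),(5:ℤ)), ((5:ℤ),(2:ℤ)), ((5:ℤ),(4:ℤ)), ((6:ℤ),(3:ℤ))}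

theorem sweep16 : SweepFrom englishBoard 16 P0 ((2:ℤ),(0:ℤ)) := by
  refine sweep_step (P' := {((0:ℤ),(3:ℤ)), ((1:ℤ),(2:ℤ)), ((1:ℤ),(4:ℤ)), ((2:ℤ),(1:ℤ)), ((2:ℤ),(3:ℤ)), ((2:ℤ),(5:ℤ)), ((3:ℤ),(2:ℤ)), ((3:ℤ),(4:ℤ)), ((3:ℤ),(6:ℤ)), ((4:ℤ),(0:ℤ)), ((4:ℤ),(1:ℤ)), ((4:ℤ),(3:ℤ)), ((4:ℤ),(5:ℤ)), ((5:ℤ),(2:ℤ)), ((5:ℤ),(4:ℤ)), ((6:ℤ),(3:ℤ))}) (B := ((3:ℤ),(0:ℤ)))  (C := ((4:ℤ),(0:ℤ))) (by unfold IsJumpTriple; exact ⟨by decide, by decide, by decide, ((1:ℤ),(0:ℤ)), by decide, by decide, by decide⟩) (by decide) (by decide) (by decide) (by decide) ?_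
  refine sweep_step (P' := {((0:ℤ),(3:ℤ)), ((1:ℤ),(2:ℤ)), ((1:ℤ),(4:ℤ)), ((2:ℤ),(1:ℤ)), ((2:ℤ),(3:ℤ)), ((2:ℤ),(5:ℤ)), ((3:ℤ),(2:ℤ)), ((3:ℤ),(4:ℤ)), ((3:ℤ),(6:ℤ)), ((4:ℤ),(2:ℤ)), ((4:ℤ),(3:ℤ)), ((4:ℤ),(5:ℤ)), ((5:ℤ),(2:ℤ)), ((5:ℤ),(4:ℤ)), ((6:ℤ),(3:ℤ))}) (B := ((4:ℤ),(1:ℤ)))  (C := ((4:ℤ),(2:ℤ))) (by unfold IsJumpTriple; exact ⟨by decide, by decide, by decide, ((0:ℤ),(1:ℤ)), by decide, by decide, by decide⟩) (by decide) (by decide) (by decide) (by decide) ?_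
  refine sweep_step (P' := {((0:ℤ),(3:ℤ)), ((1:ℤ),(2:ℤ)), ((1:ℤ),(4:ℤ)), ((2:ℤ),(1:ℤ)), ((2:ℤ),(3:ℤ)), ((2:ℤ),(5:ℤ)), ((3:ℤ),(2:ℤ)), ((3:ℤ),(4:ℤ)), ((3:ℤ),(6:ℤ)), ((4:ℤ),(3:ℤ)), ((4:ℤ),(5:ℤ)), ((5:ℤ),(4:ℤ)), ((6:ℤ),(2:ℤ)), ((6:ℤ),(3:ℤ))}) (B := ((5:ℤ),(2:ℤ)))  (C := ((6:ℤ),(2:ℤ))) (by unfold IsJumpTriple; exact ⟨by decide, by decide, by decide, ((1:ℤ),(0:ℤ)), by decide, by decide, by decide⟩) (by decide) (by decide) (by decide) (by decide) ?_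
  refine sweep_step (P' := {((0:ℤ),(3:ℤ)), ((1:ℤ),(2:ℤ)), ((1:ℤ),(4:ℤ)), ((2:ℤ),(1:ℤ)), ((2:ℤ),(3:ℤ)), ((2:ℤ),(5:ℤ)), ((3:ℤ),(2:ℤ)), ((3:ℤ),(4:ℤ)), ((3:ℤ),(6:ℤ)), ((4:ℤ),(3:ℤ)), ((4:ℤ),(5:ℤ)), ((5:ℤ),(4:ℤ)), ((6:ℤ),(4:ℤ))}) (B := ((6:ℤ),(3:ℤ)))  (C := ((6:ℤ),(4:ℤ))) (by unfold IsJumpTriple; exact ⟨by decide, by decide, by decide, ((0:ℤ),(1:ℤ)), by decide, by decide, by decide⟩) (by decide) (by decide) (by decide) (by decide) ?_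
  refine sweep_step (P' := {((0:ℤ),(3:ℤ)), ((1:ℤ),(2:ℤ)), ((1:ℤ),(4:ℤ)), ((2:ℤ),(1:ℤ)), ((2:ℤ),(3:ℤ)), ((2:ℤ),(5:ℤ)), ((3:ℤ),(2:ℤ)), ((3:ℤ),(4:ℤ)), ((3:ℤ),(6:ℤ)), ((4:ℤ),(3:ℤ)), ((4:ℤ),(4:ℤ)), ((4:ℤ),(5:ℤ))}) (B := ((5:ℤ),(4:ℤ)))  (C := ((4:ℤ),(4:ℤ))) (by unfold IsJumpTriple; exact ⟨by decide, by decide, by decide, ((-1:ℤ),(0:ℤ)), by decide, by decide, by decide⟩) (by decide) (by decide) (by decide) (by decide) ?_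
  refine sweep_step (P' := {((0:ℤ),(3:ℤ)), ((1:ℤ),(2:ℤ)), ((1:ℤ),(4:ℤ)), ((2:ℤ),(1:ℤ)), ((2:ℤ),(3:ℤ)), ((2:ℤ),(5:ℤ)), ((3:ℤ),(2:ℤ)), ((3:ℤ),(4:ℤ)), ((3:ℤ),(6:ℤ)), ((4:ℤ),(3:ℤ)), ((4:ℤ),(6:ℤ))}) (B := ((4:ℤ),(5:ℤ)))  (C := ((4:ℤ),(6:ℤ))) (by unfold IsJumpTriple; exact ⟨by decide, by decide, by decide, ((0:ℤ),(1:ℤ)), by decide, by decide, by decide⟩) (by decide) (by decide) (by decide) (by decide) ?_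
  refine sweep_step (P' := {((0:ℤ),(3:ℤ)), ((1:ℤ),(2:ℤ)), ((1:ℤ),(4:ℤ)), ((2:ℤ),(1:ℤ)), ((2:ℤ),(3:ℤ)), ((2:ℤ),(5:ℤ)), ((2:ℤ),(6:ℤ)), ((3:ℤ),(2:ℤ)), ((3:ℤ),(4:ℤ)), ((4:ℤ),(3:ℤ))}) (B := ((3:ℤ),(6:ℤ)))  (C := ((2:ℤ),(6:ℤ))) (by unfold IsJumpTriple; exact ⟨by decide, by decide, by decide, ((-1:ℤ),(0:ℤ)), by decide, by decide, by decide⟩) (by decide) (by decide) (by decide) (by decide) ?_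
  refine sweep_step (P' := {((0:ℤ),(3:ℤ)), ((1:ℤ),(2:ℤ)), ((1:ℤ),(4:ℤ)), ((2:ℤ),(1:ℤ)), ((2:ℤ),(3:ℤ)), ((2:ℤ),(4:ℤ)), ((3:ℤ),(2:ℤ)), ((3:ℤ),(4:ℤ)), ((4:ℤ),(3:ℤ))}) (B := ((2:ℤ),(5:ℤ)))  (C := ((2:ℤ),(4:ℤ))) (by unfold IsJumpTriple; exact ⟨by decide, by decide, by decide, ((0:ℤ),(-1:ℤ)), by decide, by decide, by decide⟩) (by decide) (by decide) (by decide) (by decide) ?_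
  refine sweep_step (P' := {((0:ℤ),(3:ℤ)), ((0:ℤ),(4:ℤ)), ((1:ℤ),(2:ℤ)), ((2:ℤ),(1:ℤ)), ((2:ℤ),(3:ℤ)), ((3:ℤ),(2:ℤ)), ((3:ℤ),(4:ℤ)), ((4:ℤ),(3:ℤ))}) (B := ((1:ℤ),(4:ℤ)))  (C := ((0:ℤ),(4:ℤ))) (by unfold IsJumpTriple; exact ⟨by decide, by decide, by decide, ((-1:ℤ),(0:ℤ)), by decide, by decide, by decide⟩) (by decide) (by decide) (by decide) (by decide) ?_
  refine sweep_step (P' := {((0:ℤ),(2:ℤ)), ((1:ℤ),(2:ℤ)), ((2:ℤ),(1:ℤ)), ((2:ℤ),(3:ℤ)), ((3:ℤ),(2:ℤ)), ((3:ℤ),(4:ℤ)), ((4:ℤ),(3:ℤ))}) (B := ((0:ℤ),(3:ℤ)))  (C := ((0:ℤ),(2:ℤ))) (by unfold IsJumpTriple; exact ⟨by decide, by decide, by decide, ((0:ℤ),(-1:ℤ)), by decide, by decide, by decide⟩) (by decide) (by decide) (by decide) (by decide) ?_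
  refine sweep_step (P' := {((2:ℤ),(1:ℤ)), ((2:ℤ),(2:ℤ)), ((2:ℤ),(3:ℤ)), ((3:ℤ),(2:ℤ)), ((3:ℤ),(4:ℤ)), ((4:ℤ),(3:ℤ))}) (B := ((1:ℤ),(2:ℤ)))  (C := ((2:ℤ),(2:ℤ))) (by unfold IsJumpTriple; exact ⟨by decide, by decide, by decide, ((1:ℤ),(0:ℤ)), by decide, by decide, by decide⟩) (by decide) (by decide) (by decide) (by decide) ?_
  refine sweep_step (P' := {((2:ℤ),(1:ℤ)), ((2:ℤ),(4:ℤ)), ((3:ℤ),(2:ℤ)), ((3:ℤ),(4:ℤ)), ((4:ℤ),(3:ℤ))}) (B := ((2:ℤ),(3:ℤ)))  (C := ((2:ℤ),(4:ℤ))) (by unfold IsJumpTriple; exact ⟨by decide, by decide, by decide, ((0:ℤ),(1:ℤ)), by decide, by decide, by decide⟩) (by decide) (by decide) (by decide) (by decide) ?_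
  refine sweep_step (P' := {((2:ℤ),(1:ℤ)), ((3:ℤ),(2:ℤ)), ((4:ℤ),(3:ℤ)), ((4:ℤ),(4:ℤ))}) (B := ((3:ℤ),(4:ℤ)))  (C := ((4:ℤ),(4:ℤ))) (by unfold IsJumpTriple; exact ⟨by decide, by decide, by decide, ((1:ℤ),(0:ℤ)), by decide, by decide, by decide⟩) (by decide) (by decide) (by decide) (by decide) ?_
  refine sweep_step (P' := {((2:ℤ),(1:ℤ)), ((3:ℤ),(2:ℤ)), ((4:ℤ),(2:ℤ))}) (B := ((4:ℤ),(3:ℤ)))  (C := ((4:ℤ),(2:ℤ))) (by unfold IsJumpTriple; exact ⟨by decide, by decide, by decide, ((0:ℤ),(-1:ℤ)), by decide, by decide, by decide⟩) (by decide) (by decide) (by decide) (by decide) ?_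
  refine sweep_step (P' := {((2:ℤ),(1:ℤ)), ((2:ℤ),(2:ℤ))}) (B := ((3:ℤ),(2:ℤ)))  (C := ((2:ℤ),(2:ℤ))) (by unfold IsJumpTriple; exact ⟨by decide, by decide, by decide, ((-1:ℤ),(0:ℤ)), by decide, by decide, by decide⟩) (by decide) (by decide) (by decide) (by decide) ?_
  refine sweep_step (P' := {((2:ℤ),(0:ℤ))}) (B := ((2:ℤ),(1:ℤ)))  (C := ((2:ℤ),(0:ℤ))) (by unfold IsJumpTriple; exact ⟨by decide, by decide, by decide, ((0:ℤ),(-1:ℤ)), by decide, by decide, by decide⟩) (by decide) (by decide) (by decide) (by decide) ?_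
  trivial


/-- on the English board the longest geometrically possible sweep
has length 16: some position admits a 16-sweep, and no position admits a sweep
of length 17 or more. -/
theorem stmt_15 :
    (∃ P : Finset (ℤ × ℤ), P ⊆ englishBoard ∧ CanSweep englishBoard P 16) ∧
    (∀ k : ℕ, 17 ≤ k → ∀ P : Finset (ℤ × ℤ), P ⊆ englishBoard →
      ¬ CanSweep englishBoard P k) := by
  constructor
  · exact ⟨P0, by decide, ((2:ℤ),(0:ℤ)), by decide, sweep16⟩
  · intro k hk P _ hcs
    obtain ⟨a, _, hs⟩ := hcs
    have h1 := key k P a ∅ hs (by simp) (Finset.empty_subset _)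
    rw [Finset.sdiff_empty] at h1
    have h2 := goodA_card a
    omega
end

section
/- In any solution of 'vacate d1, finish at d1' on the 39-hole semi-Wiegleb board, the jump d8-d6 must occur and no jump whose jumped-over hole is d8 can occur; i.e., the only way d8 is vacated is by the peg at d8 itself jumping to d6. -/
/-- The 39-hole "semi-Wiegleb" board: columns a–g are x = 0..6, rows 1–9 are
y = 0..8; holes where `2 ≤ x ≤ 4` or `3 ≤ y ≤ 5`. -/
noncomputable def semiWieglebBoard : Finset (ℤ × ℤ) :=
  (Finset.Icc (0:ℤ) 6 ×ˢ Finset.Icc (0:ℤ) 8).filter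
    (fun p => (2 ≤ p.1 ∧ p.1 ≤ 4) ∨ (3 ≤ p.2 ∧ p.2 ≤ 5))

/-- `Play T P ms Q`: starting from position `P`, executing the list of jumps
`ms` (each given as a triple `(A, B, C)`: peg at `A` jumps over `B` into `C`)
is legal and ends in position `Q`. -/
def Play (T : Finset (ℤ × ℤ)) :
    Finset (ℤ × ℤ) → List ((ℤ × ℤ) × (ℤ × ℤ) × (ℤ × ℤ)) → Finset (ℤ × ℤ) → Prop
  | P, [], Q => P = Q
  | P, m :: ms, Q =>
      (IsJumpTriple T m.1 m.2.1 m.2.2 ∧ m.1 ∈ P ∧ m.2.1 ∈ P ∧ m.2.2 ∉ P) ∧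
        Play T ((P \ {m.1, m.2.1}) ∪ {m.2.2}) ms Q

/-! ### Auxiliary definitions for the proof -/

abbrev Mv := (ℤ × ℤ) × (ℤ × ℤ) × (ℤ × ℤ)

/-- The pagoda function. -/
def fpag : ℤ × ℤ → ℤ := fun p =>
  if p = (3,1) ∨ p = (3,7) ∨ p = (1,3) ∨ p = (3,3) ∨ p = (5,3) ∨ p = (1,5) ∨ p = (3,5) ∨ p = (5,5) then 1
  else if p = (0,3) ∨ p = (6,3) ∨ p = (0,5) ∨ p = (6,5) then -1 else 0

/-- Change of the pagoda sum under move `m`. -/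
def dS (m : Mv) : ℤ := fpag m.2.2 - fpag m.1 - fpag m.2.1

def iA (h : ℤ × ℤ) (m : Mv) : ℤ := if m.1 = h then 1 else 0
def iB (h : ℤ × ℤ) (m : Mv) : ℤ := if m.2.1 = h then 1 else 0
def iC (h : ℤ × ℤ) (m : Mv) : ℤ := if m.2.2 = h then 1 else 0

lemma iA_nonneg (h : ℤ × ℤ) (m : Mv) : 0 ≤ iA h m := by unfold iA; split <;> norm_num
lemma iB_nonneg (h : ℤ × ℤ) (m : Mv) : 0 ≤ iB h m := by unfold iB; split <;> norm_num
lemma iC_nonneg (h : ℤ × ℤ) (m : Mv) : 0 ≤ iC h m := by unfold iC; split <;> norm_num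

/-! ### List sum helpers -/

lemma lsum_le (l : List Mv) (f g : Mv → ℤ) (h : ∀ x ∈ l, f x ≤ g x) :
    (l.map f).sum ≤ (l.map g).sum := by
  induction l with
  | nil => simp
  | cons a t ih =>
      simp only [List.map_cons, List.sum_cons]
      exact add_le_add (h a (by simp)) (ih fun x hx => h x (List.mem_cons_of_mem _ hx))

lemma lsum_nonneg (l : List Mv) (f : Mv → ℤ) (h : ∀ x ∈ l, 0 ≤ f x) :
    0 ≤ (l.map f).sum := by
  induction l with
  | nil => simp
  | cons a t ih =>
      simp only [List.map_cons, List.sum_cons]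
      have := h a (by simp)
      have := ih fun x hx => h x (List.mem_cons_of_mem _ hx)
      linarith

lemma lsum_eq_zero (l : List Mv) (f : Mv → ℤ) (h : ∀ x ∈ l, f x = 0) :
    (l.map f).sum = 0 := by
  induction l with
  | nil => simp
  | cons a t ih =>
      simp only [List.map_cons, List.sum_cons]
      rw [h a (by simp), ih fun x hx => h x (List.mem_cons_of_mem _ hx)]; ring

lemma lsum_single (l : List Mv) (f : Mv → ℤ) (h : ∀ x ∈ l, 0 ≤ f x)
    (m : Mv) (hm : m ∈ l) : f m ≤ (l.map f).sum := by
  induction l with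
  | nil => simp at hm
  | cons a t ih =>
      simp only [List.map_cons, List.sum_cons]
      rcases List.mem_cons.mp hm with rfl | hm'
      · have : 0 ≤ (t.map f).sum := lsum_nonneg t f fun x hx => h x (List.mem_cons_of_mem _ hx)
        linarith
      · have h1 : 0 ≤ f a := h a (by simp)
        have := ih (fun x hx => h x (List.mem_cons_of_mem _ hx)) hm'
        linarith

lemma lsum_sub (l : List Mv) (a b c : Mv → ℤ) :
    (l.map (fun x => a x - b x - c x)).sum
      = (l.map a).sum - (l.map b).sum - (l.map c).sum := by
  induction l with
  | nil => simp
  | cons x t ih => simp only [List.map_cons, List.sum_cons, ih]; ring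

lemma lsum_sub3 (l : List Mv) (a b c d : Mv → ℤ) :
    (l.map (fun x => a x - b x - c x - d x)).sum
      = (l.map a).sum - (l.map b).sum - (l.map c).sum - (l.map d).sum := by
  induction l with
  | nil => simp
  | cons x t ih => simp only [List.map_cons, List.sum_cons, ih]; ring

/-! ### Board facts (finite checks) -/

theorem board_facts : ∀ A ∈ semiWieglebBoard, ∀ d ∈ dirs,
    A + d ∈ semiWieglebBoard → A + d + d ∈ semiWieglebBoard →
    (fpag (A+d+d) - fpag A - fpag (A+d)
        + (if A+d+d = ((3:ℤ),(0:ℤ)) then (1:ℤ) else 0)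
        + (if A+d+d = ((3:ℤ),(2:ℤ)) then (1:ℤ) else 0)
        + (if A+d = ((3:ℤ),(7:ℤ)) then (1:ℤ) else 0) ≤ 0)
    ∧ ((if A+d+d = ((3:ℤ),(0:ℤ)) then (1:ℤ) else 0) ≤ (if A = ((3:ℤ),(2:ℤ)) then 1 else 0))
    ∧ ((if A+d+d = ((3:ℤ),(1:ℤ)) then (1:ℤ) else 0) ≤ (if A+d = ((3:ℤ),(2:ℤ)) then 1 else 0))
    ∧ ((if A+d+d = ((3:ℤ),(0:ℤ)) then (1:ℤ) else 0) ≤ (if A+d = ((3:ℤ),(1:ℤ)) then 1 else 0))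
    ∧ (A = ((3:ℤ),(7:ℤ)) → A+d = ((3:ℤ),(6:ℤ)) ∧ A+d+d = ((3:ℤ),(5:ℤ))) := by decide

theorem triple_ne {T : Finset (ℤ×ℤ)} {A B C : ℤ×ℤ} (h : IsJumpTriple T A B C) :
    A ≠ B ∧ A ≠ C ∧ B ≠ C := by
  obtain ⟨-, -, -, d, hd, rfl, rfl⟩ := h
  simp only [dirs, Finset.mem_insert, Finset.mem_singleton] at hd
  rcases hd with rfl|rfl|rfl|rfl <;>
    refine ⟨?_, ?_, ?_⟩ <;> simp [Prod.ext_iff] <;> omega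

/-- The per-move facts, stated for moves. -/
theorem move_facts (m : Mv)
    (h : IsJumpTriple semiWieglebBoard m.1 m.2.1 m.2.2) :
    (dS m + iC ((3:ℤ),(0:ℤ)) m + iC ((3:ℤ),(2:ℤ)) m + iB ((3:ℤ),(7:ℤ)) m ≤ 0)
    ∧ (iC ((3:ℤ),(0:ℤ)) m ≤ iA ((3:ℤ),(2:ℤ)) m)
    ∧ (iC ((3:ℤ),(1:ℤ)) m ≤ iB ((3:ℤ),(2:ℤ)) m)
    ∧ (iC ((3:ℤ),(0:ℤ)) m ≤ iB ((3:ℤ),(1:ℤ)) m)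
    ∧ (m.1 = ((3:ℤ),(7:ℤ)) → m.2.1 = ((3:ℤ),(6:ℤ)) ∧ m.2.2 = ((3:ℤ),(5:ℤ))) := by
  obtain ⟨hA, hB, hC, d, hd, hb, hc⟩ := h
  have := board_facts m.1 hA d hd (hb ▸ hB) (hc ▸ hC)
  rw [← hc, ← hb] at this
  simpa [dS, iA, iB, iC] using this

/-! ### Play lemmas -/

lemma play_triples (T : Finset (ℤ×ℤ)) :
    ∀ ms (P Q : Finset (ℤ×ℤ)), Play T P ms Q →
      ∀ m ∈ ms, IsJumpTriple T m.1 m.2.1 m.2.2 := by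
  intro ms
  induction ms with
  | nil => intro P Q _ m hm; simp at hm
  | cons a t ih =>
      intro P Q hp m hm
      rcases List.mem_cons.mp hm with rfl | hm'
      · exact hp.1.1
      · exact ih _ _ hp.2 m hm'

lemma play_split (T : Finset (ℤ×ℤ)) :
    ∀ l₁ l₂ (P Q : Finset (ℤ×ℤ)), Play T P (l₁ ++ l₂) Q →
      ∃ R, Play T P l₁ R ∧ Play T R l₂ Q := by
  intro l₁
  induction l₁ with
  | nil => intro l₂ P Q hp; exact ⟨P, rfl, hp⟩
  | cons a t ih =>
      intro l₂ P Q hp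
      obtain ⟨R, h1, h2⟩ := ih l₂ _ _ hp.2
      exact ⟨R, ⟨hp.1, h1⟩, h2⟩

lemma pair_subset {P : Finset (ℤ×ℤ)} {A B : ℤ×ℤ} (hA : A ∈ P) (hB : B ∈ P) :
    ({A, B} : Finset (ℤ×ℤ)) ⊆ P := by
  simp [Finset.insert_subset_iff, hA, hB]

lemma pair_disj {P : Finset (ℤ×ℤ)} {A B C : ℤ×ℤ} (hC : C ∉ P) :
    Disjoint (P \ {A, B}) ({C} : Finset (ℤ×ℤ)) :=
  Finset.disjoint_singleton_right.mpr fun hc => hC (Finset.mem_sdiff.mp hc).1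

lemma play_card (T : Finset (ℤ×ℤ)) :
    ∀ ms (P Q : Finset (ℤ×ℤ)), Play T P ms Q → P.card = Q.card + ms.length := by
  intro ms
  induction ms with
  | nil => intro P Q hp; rw [hp]; simp
  | cons a t ih =>
      intro P Q hp
      obtain ⟨⟨htr, hA, hB, hC⟩, hrest⟩ := hp
      obtain ⟨hab, -, -⟩ := triple_ne htr
      have hsub := pair_subset hA hB
      have h1 : ((P \ {a.1, a.2.1}) ∪ {a.2.2}).card = P.card - 2 + 1 := by
        rw [Finset.card_union_of_disjoint (pair_disj hC), Finset.card_sdiff_of_subset hsub,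
          Finset.card_pair hab, Finset.card_singleton]
      have h2 : 2 ≤ P.card := by
        have := Finset.card_le_card hsub
        rwa [Finset.card_pair hab] at this
      have := ih _ _ hrest
      rw [h1] at this
      simp only [List.length_cons]
      omega

lemma play_sum (T : Finset (ℤ×ℤ)) :
    ∀ ms (P Q : Finset (ℤ×ℤ)), Play T P ms Q →
      (∑ p ∈ Q, fpag p) = (∑ p ∈ P, fpag p) + (ms.map dS).sum := by
  intro ms
  induction ms with
  | nil => intro P Q hp; rw [hp]; simp
  | cons a t ih =>
      intro P Q hp
      obtain ⟨⟨htr, hA, hB, hC⟩, hrest⟩ := hp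
      obtain ⟨hab, -, -⟩ := triple_ne htr
      have hstep : (∑ p ∈ (P \ {a.1, a.2.1}) ∪ {a.2.2}, fpag p)
          = (∑ p ∈ P, fpag p) + dS a := by
        rw [Finset.sum_union (pair_disj hC), Finset.sum_sdiff_eq_sub (pair_subset hA hB),
          Finset.sum_pair hab, Finset.sum_singleton, dS]
        ring
      have := ih _ _ hrest
      rw [hstep] at this
      simp only [List.map_cons, List.sum_cons]
      linarith

lemma play_flow (T : Finset (ℤ×ℤ)) (h : ℤ×ℤ) :
    ∀ ms (P Q : Finset (ℤ×ℤ)), Play T P ms Q →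
      (if h ∈ Q then (1:ℤ) else 0)
        = (if h ∈ P then (1:ℤ) else 0)
          + (ms.map (fun m => iC h m - iA h m - iB h m)).sum := by
  intro ms
  induction ms with
  | nil => intro P Q hp; rw [hp]; simp
  | cons a t ih =>
      intro P Q hp
      obtain ⟨⟨htr, hA, hB, hC⟩, hrest⟩ := hp
      obtain ⟨hab, hac, hbc⟩ := triple_ne htr
      have hstep : (if h ∈ (P \ {a.1, a.2.1}) ∪ {a.2.2} then (1:ℤ) else 0)
          = (if h ∈ P then (1:ℤ) else 0) + (iC h a - iA h a - iB h a) := by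
        simp only [Finset.mem_union, Finset.mem_sdiff, Finset.mem_insert,
          Finset.mem_singleton, iA, iB, iC]
        by_cases h1 : a.1 = h <;> by_cases h2 : a.2.1 = h <;> by_cases h3 : a.2.2 = h <;>
          by_cases h4 : h ∈ P <;> simp_all [eq_comm]
      have := ih _ _ hrest
      rw [hstep] at this
      simp only [List.map_cons, List.sum_cons]
      linarith

/-- in any solution of "vacate d1, finish at d1" on the
semi-Wiegleb board, the jump d8-d6 (triple ((3,7),(3,6),(3,5))) occurs, and no
jump whose jumped-over hole is d8 = (3,7) occurs. -/
theorem stmt_19 (ms : List ((ℤ × ℤ) × (ℤ × ℤ) × (ℤ × ℤ)))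
    (hplay : Play semiWieglebBoard
      (semiWieglebBoard \ {((3:ℤ), (0:ℤ))}) ms {((3:ℤ), (0:ℤ))}) :
    (((3:ℤ),(7:ℤ)), (((3:ℤ),(6:ℤ)), ((3:ℤ),(5:ℤ)))) ∈ ms ∧
    ∀ m ∈ ms, m.2.1 ≠ ((3:ℤ), (7:ℤ)) := by
  have htr := play_triples semiWieglebBoard ms _ _ hplay
  have hmf : ∀ m ∈ ms, _ := fun m hm => move_facts m (htr m hm)
  -- length of ms is 37
  have hcard := play_card semiWieglebBoard ms _ _ hplay
  have hP0card : (semiWieglebBoard \ {((3:ℤ),(0:ℤ))}).card = 38 := by decide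
  have hlen : ms.length = 37 := by
    rw [hP0card, Finset.card_singleton] at hcard; omega
  -- decompose ms = m0 :: (mid ++ [mL])
  obtain ⟨m0, rest, rfl⟩ : ∃ m0 rest, ms = m0 :: rest := by
    cases ms with
    | nil => simp at hlen
    | cons a t => exact ⟨a, t, rfl⟩
  obtain ⟨⟨htr0, hA0, hB0, hC0⟩, hrest⟩ := hplay
  -- the first move ends at d1
  have hfirst : m0.2.2 = ((3:ℤ),(0:ℤ)) := by
    have hmem : m0.2.2 ∈ semiWieglebBoard := htr0.2.2.1
    by_contra hne
    exact hC0 (Finset.mem_sdiff.mpr ⟨hmem, by simpa using hne⟩)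
  obtain ⟨mid, mL, rfl⟩ : ∃ mid mL, rest = mid ++ [mL] := by
    rcases List.eq_nil_or_concat rest with rfl | ⟨mid, mL, h⟩
    · simp at hlen
    · exact ⟨mid, mL, by simpa using h⟩
  obtain ⟨R, hmidp, hlast⟩ := play_split semiWieglebBoard mid [mL] _ _ hrest
  -- the last move ends at d1
  have hlastC : mL.2.2 = ((3:ℤ),(0:ℤ)) := by
    obtain ⟨-, hQ⟩ := hlast
    have : mL.2.2 ∈ ({((3:ℤ),(0:ℤ))} : Finset (ℤ×ℤ)) := by
      rw [← hQ]; exact Finset.mem_union_right _ (Finset.mem_singleton_self _)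
    simpa using this
  have hplay' : Play semiWieglebBoard (semiWieglebBoard \ {((3:ℤ),(0:ℤ))})
      (m0 :: (mid ++ [mL])) {((3:ℤ),(0:ℤ))} := ⟨⟨htr0, hA0, hB0, hC0⟩, hrest⟩
  -- sum of iC d1 is at least 2
  have hSC1 : 2 ≤ ((m0 :: (mid ++ [mL])).map (iC ((3:ℤ),(0:ℤ)))).sum := by
    have h0 : iC ((3:ℤ),(0:ℤ)) m0 = 1 := by simp [iC, hfirst]
    have hL : iC ((3:ℤ),(0:ℤ)) mL = 1 := by simp [iC, hlastC]
    have hmid0 : 0 ≤ (mid.map (iC ((3:ℤ),(0:ℤ)))).sum :=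
      lsum_nonneg mid _ fun x _ => iC_nonneg _ x
    simp only [List.map_cons, List.map_append, List.sum_cons, List.sum_append,
      List.map_nil, List.sum_nil, h0, hL]
    linarith
  -- pagoda sum: total change is -4
  have hsum := play_sum semiWieglebBoard _ _ _ hplay'
  have hS0 : (∑ p ∈ semiWieglebBoard \ {((3:ℤ),(0:ℤ))}, fpag p) = 4 := by decide
  have hS1 : (∑ p ∈ ({((3:ℤ),(0:ℤ))} : Finset (ℤ×ℤ)), fpag p) = 0 := by decide
  have hdS : (((m0 :: (mid ++ [mL]))).map dS).sum = -4 := by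
    rw [hS0, hS1] at hsum; linarith
  set msl : List Mv := m0 :: (mid ++ [mL]) with hmsl
  -- budget inequality
  have hbudget : (msl.map dS).sum ≤ (msl.map (fun _ => (0:ℤ))).sum
      - (msl.map (iC ((3:ℤ),(0:ℤ)))).sum - (msl.map (iC ((3:ℤ),(2:ℤ)))).sum
      - (msl.map (iB ((3:ℤ),(7:ℤ)))).sum := by
    rw [← lsum_sub3]
    exact lsum_le _ _ _ fun m hm => by have := (hmf m hm).1; linarith
  have hzero : (msl.map (fun _ => (0:ℤ))).sum = 0 := lsum_eq_zero _ _ fun _ _ => rfl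
  -- pointwise inequalities summed
  have hI1 : (msl.map (iC ((3:ℤ),(0:ℤ)))).sum ≤ (msl.map (iA ((3:ℤ),(2:ℤ)))).sum :=
    lsum_le _ _ _ fun m hm => (hmf m hm).2.1
  have hI2 : (msl.map (iC ((3:ℤ),(1:ℤ)))).sum ≤ (msl.map (iB ((3:ℤ),(2:ℤ)))).sum :=
    lsum_le _ _ _ fun m hm => (hmf m hm).2.2.1
  have hI3 : (msl.map (iC ((3:ℤ),(0:ℤ)))).sum ≤ (msl.map (iB ((3:ℤ),(1:ℤ)))).sum :=
    lsum_le _ _ _ fun m hm => (hmf m hm).2.2.2.1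
  -- flow balances
  have hflow : ∀ h : ℤ×ℤ, (if h ∈ ({((3:ℤ),(0:ℤ))} : Finset (ℤ×ℤ)) then (1:ℤ) else 0)
      = (if h ∈ semiWieglebBoard \ {((3:ℤ),(0:ℤ))} then (1:ℤ) else 0)
        + ((msl.map (iC h)).sum - (msl.map (iA h)).sum - (msl.map (iB h)).sum) := by
    intro h
    have := play_flow semiWieglebBoard h msl _ _ hplay'
    rwa [lsum_sub] at this
  have hf2 : (0:ℤ) = 1 + ((msl.map (iC ((3:ℤ),(1:ℤ)))).sum
      - (msl.map (iA ((3:ℤ),(1:ℤ)))).sum - (msl.map (iB ((3:ℤ),(1:ℤ)))).sum) := by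
    have := hflow ((3:ℤ),(1:ℤ))
    rwa [if_neg (by decide), if_pos (by decide)] at this
  have hf3 : (0:ℤ) = 1 + ((msl.map (iC ((3:ℤ),(2:ℤ)))).sum
      - (msl.map (iA ((3:ℤ),(2:ℤ)))).sum - (msl.map (iB ((3:ℤ),(2:ℤ)))).sum) := by
    have := hflow ((3:ℤ),(2:ℤ))
    rwa [if_neg (by decide), if_pos (by decide)] at this
  have hf8 : (0:ℤ) = 1 + ((msl.map (iC ((3:ℤ),(7:ℤ)))).sum
      - (msl.map (iA ((3:ℤ),(7:ℤ)))).sum - (msl.map (iB ((3:ℤ),(7:ℤ)))).sum) := by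
    have := hflow ((3:ℤ),(7:ℤ))
    rwa [if_neg (by decide), if_pos (by decide)] at this
  -- nonnegativity of atomic sums
  have hnA2 : 0 ≤ (msl.map (iA ((3:ℤ),(1:ℤ)))).sum :=
    lsum_nonneg _ _ fun x _ => iA_nonneg _ x
  have hnC8 : 0 ≤ (msl.map (iC ((3:ℤ),(7:ℤ)))).sum :=
    lsum_nonneg _ _ fun x _ => iC_nonneg _ x
  have hnB8 : 0 ≤ (msl.map (iB ((3:ℤ),(7:ℤ)))).sum :=
    lsum_nonneg _ _ fun x _ => iB_nonneg _ x
  -- conclude: no jumps over d8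
  have hB8zero : (msl.map (iB ((3:ℤ),(7:ℤ)))).sum = 0 := by linarith
  have hnoB8 : ∀ m ∈ msl, m.2.1 ≠ ((3:ℤ),(7:ℤ)) := by
    intro m hm hcon
    have h1 : iB ((3:ℤ),(7:ℤ)) m = 1 := by simp [iB, hcon]
    have := lsum_single msl (iB ((3:ℤ),(7:ℤ))) (fun x _ => iB_nonneg _ x) m hm
    rw [h1, hB8zero] at this
    norm_num at this
  -- conclude: some move has A = d8
  have hA8pos : 1 ≤ (msl.map (iA ((3:ℤ),(7:ℤ)))).sum := by linarith
  have hexA8 : ∃ m ∈ msl, m.1 = ((3:ℤ),(7:ℤ)) := by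
    by_contra hcon
    push_neg at hcon
    have : (msl.map (iA ((3:ℤ),(7:ℤ)))).sum = 0 :=
      lsum_eq_zero _ _ fun x hx => by simp [iA, hcon x hx]
    omega
  obtain ⟨m, hm, hmA⟩ := hexA8
  have hfact := (hmf m hm).2.2.2.2 hmA
  have hmeq : m = (((3:ℤ),(7:ℤ)), (((3:ℤ),(6:ℤ)), ((3:ℤ),(5:ℤ)))) := by
    obtain ⟨a, b, c⟩ := m
    exact Prod.ext hmA (Prod.ext hfact.1 hfact.2)
  exact ⟨hmeq ▸ hm, hnoB8⟩
end
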